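/- Let T̂_• be an admissible hierarchical mesh and β̂ ∈ Ĥ_• with level k. Then the full truncation stabilizes after one step: Trunc_•(β̂) = trunc_•^{k+1}(β̂), i.e., for all k'' > k+1 and the two-scale representation trunc_•^{k+1}(β̂) = Σ_{β̂''∈B̂^{k''}} c_{β̂''} β̂'', every β̂'' with supp(β̂'') ⊆ Ω̂_•^{k''} has coefficient c_{β̂''} = 0. -/
import Mathlib


/- Truncation stabilizes after one step on admissible meshes: let `β̂ ∈ Ĥ_•` have level
`k` and let `c k'' β''` be the coefficients of `trunc_•^{k+1}(β̂)` with respect to the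
basis `B̂^{k''}`.  Then for every `k'' > k+1, every `β'' ∈ B̂^{k''}` with
`supp(β'') ⊆ Ω̂_•^{k''}` has coefficient `c k'' β'' = 0`; i.e.
`Trunc_•(β̂) = trunc_•^{k+1}(β̂)`.  The hypotheses are the coefficient–support inclusion
(Step 1), the fact that any fine B-spline with support inside `Ω̂^{k''}` contains an
active element of level `≥ k''`, and admissibility with the level characterization. -/
theorem truncation_stabilizes {X Spline : Type}
    (supp : Spline → Set X)
    (B : ℕ → Set Spline)                 -- the tensor-product B-spline bases `B̂^{k''}`
    (Ω : ℕ → Set X)                      -- the domain hierarchy `Ω̂_•^k`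
    (Tmesh : Set (Set X)) (lev : Set X → ℕ)
    (β : Spline) (k : ℕ) (hβ : β ∈ B k)  -- `β̂ ∈ Ĥ_•` of level `k`
    (c : ℕ → Spline → ℝ)                 -- coefficients of `trunc_•^{k+1}(β̂)` in `B̂^{k''}`
    -- coefficient–support inclusion:
    (hsuppincl : ∀ k'' : ℕ, ∀ β'' ∈ B k'', c k'' β'' ≠ 0 → supp β'' ⊆ supp β)
    -- a fine B-spline with support inside `Ω̂^{k''}` contains an active element of level
    -- at least `k''`:
    (hactive : ∀ k'' : ℕ, ∀ β'' ∈ B k'', supp β'' ⊆ Ω k'' →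
        ∃ T ∈ Tmesh, k'' ≤ lev T ∧ T ⊆ supp β'')
    -- admissibility + level characterization: active elements inside `supp β̂` have
    -- level at most `k + 1`:
    (hadm : ∀ T ∈ Tmesh, T ⊆ supp β → lev T ≤ k + 1) :
    ∀ k'' : ℕ, k + 1 < k'' → ∀ β'' ∈ B k'', supp β'' ⊆ Ω k'' → c k'' β'' = 0 := by
  intro k'' hk β'' hβ'' hsupp
  by_contra hc
  obtain ⟨T, hT, hlev, hTs⟩ := hactive k'' β'' hβ'' hsupp
  have := hadm T hT (hTs.trans (hsuppincl k'' β'' hβ'' hc))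
  omega
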